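/- Let H be Hurwitz and N the positive definite solution of HᵀN + NH = -2M with M ≻ 0. If Δ(t) satisfies the uniform bound condition 2M - Δ(t)ᵀN - NΔ(t) - 2β σ_max(N) I ≻ 0 for all t (with β ≥ 0), and e solves ė = (H + Δ(t))e + δ(t) with ‖δ(t)‖ ≤ β‖e(t)‖ + c₀, then V(e) = eᵀNe satisfies V̇(t) < 0 whenever ‖e(t)‖ > 2σ_max(N)c₀ / λ, where λ > 0 is the smallest eigenvalue of 2M - Δ(t)ᵀN - NΔ(t) - 2βσ_max(N)I uniformly over t. -/

import Mathlib

open Matrix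
open scoped RealInnerProductSpace

def IsHurwitz {n : Type*} [Fintype n] [DecidableEq n] (A : Matrix n n ℝ) : Prop :=
  ∀ μ ∈ spectrum ℂ (A.map (Complex.ofReal)), μ.re < 0

noncomputable def sigmaMax {d : ℕ} {P : Matrix (Fin d) (Fin d) ℝ}
    (hP : P.IsHermitian) : ℝ := ⨆ i, hP.eigenvalues i

lemma piLp_equiv_toEuclideanLin_apply' {d : ℕ} (A : Matrix (Fin d) (Fin d) ℝ)
    (v : EuclideanSpace ℝ (Fin d)) :
    WithLp.equiv 2 (Fin d → ℝ) (Matrix.toEuclideanLin A v) = A *ᵥ WithLp.equiv 2 (Fin d → ℝ) v :=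
  rfl

lemma inner_eq_dotProduct' {d : ℕ} (x y : EuclideanSpace ℝ (Fin d)) :
    ⟪x, y⟫ = (WithLp.equiv 2 (Fin d → ℝ) x) ⬝ᵥ (WithLp.equiv 2 (Fin d → ℝ) y) := by
  simp [PiLp.inner_apply, dotProduct, mul_comm]

lemma mulVec_norm_le' {d : ℕ} {Nm : Matrix (Fin d) (Fin d) ℝ} (hN : Nm.PosDef)
    (x : EuclideanSpace ℝ (Fin d)) :
    ‖Matrix.toEuclideanLin Nm x‖ ≤ sigmaMax hN.1 * ‖x‖ := by
  set σ := sigmaMax hN.1 with hσ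
  have hσ0 : 0 ≤ σ := Real.iSup_nonneg fun i => (hN.eigenvalues_pos i).le
  have hμσ : ∀ i, hN.1.eigenvalues i ≤ σ :=
    fun i => le_ciSup (Set.Finite.bddAbove (Set.finite_range _)) i
  set b := hN.1.eigenvectorBasis with hb
  set T := Matrix.toEuclideanLin Nm with hT
  have hsym : LinearMap.IsSymmetric T := Matrix.isHermitian_iff_isSymmetric.1 hN.1
  have hTb : ∀ i, T (b i) = hN.1.eigenvalues i • b i := by
    intro i
    apply (WithLp.equiv 2 (Fin d → ℝ)).injective
    rw [hT, piLp_equiv_toEuclideanLin_apply']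
    simpa using hN.1.mulVec_eigenvectorBasis i
  have key : ∀ i, ⟪b i, T x⟫ = hN.1.eigenvalues i * ⟪b i, x⟫ := by
    intro i
    rw [← hsym (b i) x, hTb i, real_inner_smul_left]
  have norm_sq : ∀ v : EuclideanSpace ℝ (Fin d), ‖v‖ ^ 2 = ∑ i, ⟪b i, v⟫ ^ 2 := by
    intro v
    rw [← real_inner_self_eq_norm_sq, ← b.sum_inner_mul_inner v v]
    exact Finset.sum_congr rfl fun i _ => by rw [real_inner_comm, sq]
  have h1 : ‖T x‖ ^ 2 ≤ (σ * ‖x‖) ^ 2 := by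
    rw [norm_sq (T x), mul_pow, norm_sq x, Finset.mul_sum]
    refine Finset.sum_le_sum fun i _ => ?_
    rw [key i, mul_pow]
    exact mul_le_mul_of_nonneg_right
      (pow_le_pow_left₀ (hN.eigenvalues_pos i).le (hμσ i) 2) (sq_nonneg _)
  calc ‖T x‖ = Real.sqrt (‖T x‖ ^ 2) := (Real.sqrt_sq (norm_nonneg _)).symm
    _ ≤ Real.sqrt ((σ * ‖x‖) ^ 2) := Real.sqrt_le_sqrt h1
    _ = σ * ‖x‖ := Real.sqrt_sq (by positivity)

set_option maxHeartbeats 1000000 in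
/-- Core estimate in the proof of Theorem 2 (equation (A.2)): with `HᵀN + NH = -2M`,
a uniform positive-definiteness margin `2M - Δ(t)ᵀN - NΔ(t) - 2βσ_max(N)I ⪰ λI ≻ 0`,
and a perturbation bounded by `‖δ(t)‖ ≤ β‖e(t)‖ + c₀`, the Lyapunov function
`V(e) = eᵀNe` is strictly decreasing along `ė = (H+Δ(t))e + δ(t)` whenever
`‖e(t)‖ > 2σ_max(N)c₀/λ`. -/
theorem theorem2_core_estimate {d : ℕ}
    (H M Nm : Matrix (Fin d) (Fin d) ℝ)
    (hH : IsHurwitz H) (hM : M.PosDef) (hMs : M.IsSymm)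
    (hN : Nm.PosDef) (hNs : Nm.IsSymm)
    (hLyap : Hᵀ * Nm + Nm * H = -(2 : ℝ) • M)
    (Δ : ℝ → Matrix (Fin d) (Fin d) ℝ) (δ e : ℝ → EuclideanSpace ℝ (Fin d))
    (t₀ β c₀ lam : ℝ) (hβ : 0 ≤ β) (hc₀ : 0 ≤ c₀) (hlam : 0 < lam)
    (hmargin : ∀ t ≥ t₀,
      ((2 : ℝ) • M - (Δ t)ᵀ * Nm - Nm * Δ t -
        (2 * β * sigmaMax hN.1) • (1 : Matrix (Fin d) (Fin d) ℝ)).PosDef)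
    (hunif : ∀ t ≥ t₀,
      (((2 : ℝ) • M - (Δ t)ᵀ * Nm - Nm * Δ t -
          (2 * β * sigmaMax hN.1) • (1 : Matrix (Fin d) (Fin d) ℝ)) -
        lam • (1 : Matrix (Fin d) (Fin d) ℝ)).PosSemidef)
    (hδ : ∀ t ≥ t₀, ‖δ t‖ ≤ β * ‖e t‖ + c₀)
    (hode : ∀ t ≥ t₀,
      HasDerivAt e (Matrix.toEuclideanLin (H + Δ t) (e t) + δ t) t) :
    ∀ t ≥ t₀, ‖e t‖ > 2 * sigmaMax hN.1 * c₀ / lam →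
      ∃ v < (0 : ℝ),
        HasDerivAt (fun s => ⟪e s, Matrix.toEuclideanLin Nm (e s)⟫) v t := by
  intro t ht hx
  set σ := sigmaMax hN.1 with hσdef
  have hσ0 : 0 ≤ σ := Real.iSup_nonneg fun i => (hN.eigenvalues_pos i).le
  set A := Δ t with hA
  set x := e t with hxdef
  set u := δ t with hudef
  set w : EuclideanSpace ℝ (Fin d) := Matrix.toEuclideanLin (H + A) x + u with hw
  -- the derivative
  have hlin : HasDerivAt (fun s => Matrix.toEuclideanLin Nm (e s))
      (Matrix.toEuclideanLin Nm w) t := by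
    have h2 := (Matrix.toEuclideanCLM (𝕜 := ℝ) Nm).hasFDerivAt.comp_hasDerivAt t (hode t ht)
    exact h2
  have hder : HasDerivAt (fun s => ⟪e s, Matrix.toEuclideanLin Nm (e s)⟫)
      (⟪x, Matrix.toEuclideanLin Nm w⟫ + ⟪w, Matrix.toEuclideanLin Nm x⟫) t :=
    HasDerivAt.inner ℝ (hode t ht) hlin
  refine ⟨_, ?_, hder⟩
  -- notation for plain vectors
  set y : Fin d → ℝ := WithLp.equiv 2 (Fin d → ℝ) x with hy
  set uu : Fin d → ℝ := WithLp.equiv 2 (Fin d → ℝ) u with huu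
  set S : Matrix (Fin d) (Fin d) ℝ :=
    (2 : ℝ) • M - Aᵀ * Nm - Nm * A - (2 * β * σ) • (1 : Matrix (Fin d) (Fin d) ℝ) with hS
  have hww : WithLp.equiv 2 (Fin d → ℝ) w = (H + A) *ᵥ y + uu := by
    rw [hw]
    simp [piLp_equiv_toEuclideanLin_apply', Matrix.add_mulVec]
    rfl
  have keydp : ∀ (B : Matrix (Fin d) (Fin d) ℝ) (z : Fin d → ℝ),
      (B *ᵥ y) ⬝ᵥ z = y ⬝ᵥ (Bᵀ *ᵥ z) := fun B z => by
    rw [Matrix.dotProduct_mulVec, Matrix.vecMul_transpose]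
  have hmat : (H + A)ᵀ * Nm + Nm * (H + A) =
      -S - (2 * β * σ) • (1 : Matrix (Fin d) (Fin d) ℝ) := by
    have h1 : (H + A)ᵀ * Nm + Nm * (H + A)
        = (Hᵀ * Nm + Nm * H) + (Aᵀ * Nm + Nm * A) := by
      rw [Matrix.transpose_add, Matrix.add_mul, Matrix.mul_add]; abel
    rw [h1, hLyap, hS]
    module
  -- identity for the derivative value
  have hv : ⟪x, Matrix.toEuclideanLin Nm w⟫ + ⟪w, Matrix.toEuclideanLin Nm x⟫
      = -(y ⬝ᵥ (S *ᵥ y)) - (2 * β * σ) * (y ⬝ᵥ y) + 2 * (uu ⬝ᵥ (Nm *ᵥ y)) := by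
    rw [inner_eq_dotProduct', inner_eq_dotProduct', piLp_equiv_toEuclideanLin_apply',
      piLp_equiv_toEuclideanLin_apply', hww]
    rw [Matrix.mulVec_add, dotProduct_add, add_dotProduct]
    have c1 : y ⬝ᵥ (Nm *ᵥ uu) = uu ⬝ᵥ (Nm *ᵥ y) := by
      conv_lhs => rw [← hNs]
      rw [← keydp Nm uu, dotProduct_comm]
    have c2 : ((H + A) *ᵥ y) ⬝ᵥ (Nm *ᵥ y) = y ⬝ᵥ (((H + A)ᵀ * Nm) *ᵥ y) := by
      rw [keydp, Matrix.mulVec_mulVec]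
    have c3 : y ⬝ᵥ (Nm *ᵥ ((H + A) *ᵥ y)) = y ⬝ᵥ ((Nm * (H + A)) *ᵥ y) := by
      rw [Matrix.mulVec_mulVec]
    rw [c1, c2, c3]
    have c4 : y ⬝ᵥ (((H + A)ᵀ * Nm) *ᵥ y) + y ⬝ᵥ ((Nm * (H + A)) *ᵥ y)
        = y ⬝ᵥ ((-S - (2 * β * σ) • (1 : Matrix (Fin d) (Fin d) ℝ)) *ᵥ y) := by
      rw [← dotProduct_add, ← Matrix.add_mulVec, ← hmat]
    have c5 : y ⬝ᵥ ((-S - (2 * β * σ) • (1 : Matrix (Fin d) (Fin d) ℝ)) *ᵥ y)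
        = -(y ⬝ᵥ (S *ᵥ y)) - (2 * β * σ) * (y ⬝ᵥ y) := by
      rw [Matrix.sub_mulVec, Matrix.neg_mulVec, dotProduct_sub, dotProduct_neg,
        Matrix.smul_mulVec, Matrix.one_mulVec, dotProduct_smul, smul_eq_mul]
    -- assemble
    linarith [c4, c5]
  rw [hv]
  -- bounds
  have hyy : y ⬝ᵥ y = ‖x‖ ^ 2 := by
    rw [← real_inner_self_eq_norm_sq, inner_eq_dotProduct']
  have hq : lam * ‖x‖ ^ 2 ≤ y ⬝ᵥ (S *ᵥ y) := by
    have h0 := (hunif t ht).dotProduct_mulVec_nonneg y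
    simp only [star_trivial] at h0
    rw [Matrix.sub_mulVec, dotProduct_sub, Matrix.smul_mulVec, Matrix.one_mulVec,
      dotProduct_smul, smul_eq_mul, hyy] at h0
    linarith
  have hcross : uu ⬝ᵥ (Nm *ᵥ y) ≤ (β * ‖x‖ + c₀) * (σ * ‖x‖) := by
    have h1 : uu ⬝ᵥ (Nm *ᵥ y) = ⟪u, Matrix.toEuclideanLin Nm x⟫ := by
      rw [inner_eq_dotProduct', piLp_equiv_toEuclideanLin_apply']
    rw [h1]
    calc ⟪u, Matrix.toEuclideanLin Nm x⟫ ≤ ‖u‖ * ‖Matrix.toEuclideanLin Nm x‖ :=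
          real_inner_le_norm _ _
      _ ≤ (β * ‖x‖ + c₀) * (σ * ‖x‖) := by
          apply mul_le_mul (hδ t ht) (mulVec_norm_le' hN x) (norm_nonneg _)
          positivity
  have hxpos : 0 < ‖x‖ := lt_of_le_of_lt (by positivity) hx
  have hxl : 2 * σ * c₀ < lam * ‖x‖ := by
    rw [gt_iff_lt, div_lt_iff₀ hlam] at hx
    nlinarith
  rw [hyy]
  nlinarith [hq, hcross, sq_nonneg ‖x‖, mul_pos hlam hxpos]
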